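/- Let A = UΣVᵀ with U ∈ ℝ^{n×k} having orthonormal columns, Σ a k×k matrix, and V ∈ ℝ^{c×k}, and let a ∈ ℝ^{1×c}. If [ΣVᵀ ; a] = Ũ Σ̃ Ṽᵀ is an SVD of the stacked matrix (Ũ with orthonormal columns), then ([[U,0],[0,1]] Ũ) Σ̃ Ṽᵀ is a factorization of [A ; a] where the left factor [[U,0],[0,1]] Ũ has orthonormal columns. -/
import Mathlib

open Matrix

theorem stmt4 (n c k k' : ℕ)
    (A : Matrix (Fin n) (Fin c) ℝ) (a : Matrix (Fin 1) (Fin c) ℝ)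
    (U : Matrix (Fin n) (Fin k) ℝ) (S : Matrix (Fin k) (Fin k) ℝ)
    (V : Matrix (Fin c) (Fin k) ℝ)
    (hU : Uᵀ * U = 1)
    (hA : A = U * S * Vᵀ)
    (Ut : Matrix (Fin k ⊕ Fin 1) (Fin k') ℝ)
    (St : Matrix (Fin k') (Fin k') ℝ) (Vt : Matrix (Fin c) (Fin k') ℝ)
    (hUt : Utᵀ * Ut = 1)
    (hSVD : Matrix.fromRows (S * Vᵀ) a = Ut * St * Vtᵀ) :
    Matrix.fromRows A a
        = (Matrix.fromBlocks U 0 0 (1 : Matrix (Fin 1) (Fin 1) ℝ) * Ut) * St * Vtᵀ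
      ∧ (Matrix.fromBlocks U 0 0 (1 : Matrix (Fin 1) (Fin 1) ℝ) * Ut)ᵀ
          * (Matrix.fromBlocks U 0 0 (1 : Matrix (Fin 1) (Fin 1) ℝ) * Ut) = 1 := by
  constructor
  · calc Matrix.fromRows A a
        = Matrix.fromBlocks U 0 0 (1 : Matrix (Fin 1) (Fin 1) ℝ) *
            Matrix.fromRows (S * Vᵀ) a := by
          rw [fromBlocks_mul_fromRows]
          simp [hA, Matrix.mul_assoc]
      _ = _ := by rw [hSVD, Matrix.mul_assoc, Matrix.mul_assoc, Matrix.mul_assoc]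
  · rw [Matrix.transpose_mul, Matrix.mul_assoc, ← Matrix.mul_assoc (Matrix.fromBlocks U 0 0 1)ᵀ,
      Matrix.fromBlocks_transpose, Matrix.fromBlocks_multiply]
    simp [hU, hUt]
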